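/- Let K be a finite simplicial complex and a a vertex dominated by a'. Then the inclusion of the subcomplex K \ a (all simplices of K not containing a) into K is a homotopy equivalence (in particular, the deletion of a dominated vertex preserves the homotopy type of the geometric realization). -/

import Mathlib

set_option linter.unusedSectionVars false
set_option linter.unusedVariables false


variable {V : Type*} [Fintype V] [DecidableEq V]

/-- A (finite abstract) simplicial complex: a collection of finite subsets of
the vertex set closed under taking subsets. -/
def IsComplex (K : Finset (Finset V)) : Prop :=
  ∀ σ ∈ K, ∀ τ ⊆ σ, τ ∈ K

/-- A maximal simplex of `K`. -/
def IsMaximal (K : Finset (Finset V)) (σ : Finset V) : Prop :=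
  σ ∈ K ∧ ∀ τ ∈ K, σ ⊆ τ → σ = τ

/-- The geometric realization of an abstract simplicial complex `K` on the
finite vertex set `V`, as the set of convex-coefficient functions whose
support is a simplex of `K`. -/
def realization (K : Finset (Finset V)) : Set (V → ℝ) :=
  {f | (∀ v, 0 ≤ f v) ∧ (∑ v, f v) = 1 ∧
    (Finset.univ.filter fun v => f v ≠ 0) ∈ K}

/-- The deletion `K \ a`: all simplices of `K` not containing `a`. -/
def deleteVertex (K : Finset (Finset V)) (a : V) : Finset (Finset V) :=
  K.filter fun σ => a ∉ σ

/-- Every simplex is contained in a maximal simplex. -/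
lemma exists_maximal_supset (K : Finset (Finset V)) {σ : Finset V} (hσ : σ ∈ K) :
    ∃ τ, IsMaximal K τ ∧ σ ⊆ τ := by
  classical
  obtain ⟨m, hm, hmax⟩ := (K.filter fun τ => σ ⊆ τ).exists_maximal
    ⟨σ, by simp [hσ]⟩
  rw [Finset.mem_filter] at hm
  refine ⟨m, ⟨hm.1, fun τ hτ hsubm => ?_⟩, hm.2⟩
  by_contra hne'
  exact hne' (le_antisymm hsubm (hmax (Finset.mem_filter.2 ⟨hτ, hm.2.trans hsubm⟩) hsubm))

lemma insert_mem_of_dominated (K : Finset (Finset V)) (hK : IsComplex K) (a a' : V)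
    (hdom : ∀ σ : Finset V, IsMaximal K σ → a ∈ σ → a' ∈ σ)
    {σ : Finset V} (hσ : σ ∈ K) (haσ : a ∈ σ) : insert a' σ ∈ K := by
  obtain ⟨τ, hτ, hsubτ⟩ := exists_maximal_supset K hσ
  exact hK τ hτ.1 _ (Finset.insert_subset (hdom τ hτ (hsubτ haσ)) hsubτ)

noncomputable def pushFunV (a a' : V) (f : V → ℝ) (v : V) : ℝ :=
  f v + (if v = a' then f a else 0) - (if v = a then f a else 0)

lemma pushFun_apply_a (a a' : V) (hne : a' ≠ a) (f : V → ℝ) : pushFunV a a' f a = 0 := by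
  simp [pushFunV, (hne.symm : a ≠ a')]

lemma pushFun_apply_a' (a a' : V) (hne : a' ≠ a) (f : V → ℝ) :
    pushFunV a a' f a' = f a' + f a := by
  simp [pushFunV, hne]

lemma pushFun_apply_of_ne (a a' : V) (f : V → ℝ) {v : V} (h1 : v ≠ a) (h2 : v ≠ a') :
    pushFunV a a' f v = f v := by
  simp [pushFunV, h1, h2]

lemma pushFun_eq_of_zero (a a' : V) (hne : a' ≠ a) {f : V → ℝ} (hfa : f a = 0) :
    pushFunV a a' f = f := by
  funext v
  by_cases h1 : v = a
  · rw [h1, pushFun_apply_a a a' hne, hfa]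
  by_cases h2 : v = a'
  · rw [h2, pushFun_apply_a' a a' hne, hfa, add_zero]
  · exact pushFun_apply_of_ne a a' f h1 h2

lemma pushFun_nonneg (a a' : V) (hne : a' ≠ a) {f : V → ℝ} (hf : ∀ v, 0 ≤ f v) (v : V) :
    0 ≤ pushFunV a a' f v := by
  by_cases h1 : v = a
  · rw [h1, pushFun_apply_a a a' hne]
  by_cases h2 : v = a'
  · rw [h2, pushFun_apply_a' a a' hne]; exact add_nonneg (hf a') (hf a)
  · rw [pushFun_apply_of_ne a a' f h1 h2]; exact hf v

lemma sum_pushFun (a a' : V) (f : V → ℝ) : ∑ v, pushFunV a a' f v = ∑ v, f v := by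
  unfold pushFunV
  rw [Finset.sum_sub_distrib, Finset.sum_add_distrib,
    Finset.sum_ite_eq' Finset.univ a' fun _ => f a,
    Finset.sum_ite_eq' Finset.univ a fun _ => f a]
  simp

lemma continuous_pushFun_apply (a a' : V) (v : V) :
    Continuous fun f : V → ℝ => pushFunV a a' f v := by
  unfold pushFunV
  split_ifs <;> fun_prop

lemma comb_support_subset (a a' : V) (hne : a' ≠ a) (f : V → ℝ) (c d : ℝ) :
    (Finset.univ.filter fun v => c * pushFunV a a' f v + d * f v ≠ 0) ⊆
      insert a' (Finset.univ.filter fun v => f v ≠ 0) := by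
  intro v hv
  rw [Finset.mem_filter] at hv
  by_cases h2 : v = a'
  · exact Finset.mem_insert.2 (Or.inl h2)
  refine Finset.mem_insert.2 (Or.inr (Finset.mem_filter.2 ⟨Finset.mem_univ v, ?_⟩))
  intro hfv
  apply hv.2
  by_cases h1 : v = a
  · rw [h1] at hfv ⊢
    rw [pushFun_apply_a a a' hne, hfv]; ring
  · rw [pushFun_apply_of_ne a a' f h1 h2, hfv]; ring

lemma comb_mem (K : Finset (Finset V)) (hK : IsComplex K) (a a' : V) (hne : a' ≠ a)
    (hdom : ∀ σ : Finset V, IsMaximal K σ → a ∈ σ → a' ∈ σ)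
    {f : V → ℝ} (hf : f ∈ realization K) {t : ℝ} (ht0 : 0 ≤ t) (ht1 : t ≤ 1) :
    (fun v => (1 - t) * pushFunV a a' f v + t * f v) ∈ realization K := by
  obtain ⟨hf0, hf1, hf2⟩ := hf
  refine ⟨fun v => add_nonneg (mul_nonneg (by linarith) (pushFun_nonneg a a' hne hf0 v))
      (mul_nonneg ht0 (hf0 v)), ?_, ?_⟩
  · rw [Finset.sum_add_distrib, ← Finset.mul_sum, ← Finset.mul_sum, sum_pushFun, hf1]
    ring
  · by_cases hfa : f a = 0
    · have hp := pushFun_eq_of_zero a a' hne hfa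
      have he : ∀ v, (1 - t) * pushFunV a a' f v + t * f v = f v := by
        intro v; rw [hp]; ring
      simpa only [he] using hf2
    · exact hK _ (insert_mem_of_dominated K hK a a' hdom hf2
        (Finset.mem_filter.2 ⟨Finset.mem_univ a, hfa⟩)) _
        (comb_support_subset a a' hne f (1 - t) t)

lemma push_mem (K : Finset (Finset V)) (hK : IsComplex K) (a a' : V) (hne : a' ≠ a)
    (hdom : ∀ σ : Finset V, IsMaximal K σ → a ∈ σ → a' ∈ σ)
    {f : V → ℝ} (hf : f ∈ realization K) :
    pushFunV a a' f ∈ realization (deleteVertex K a) := by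
  obtain ⟨hf0, hf1, hf2⟩ := hf
  refine ⟨pushFun_nonneg a a' hne hf0, by rw [sum_pushFun, hf1], ?_⟩
  rw [deleteVertex, Finset.mem_filter]
  constructor
  · have hcomb := (comb_mem K hK a a' hne hdom ⟨hf0, hf1, hf2⟩
      (le_refl (0:ℝ)) zero_le_one).2.2
    simpa using hcomb
  · simp [pushFun_apply_a a a' hne]

/-- If `a` is a vertex of a finite simplicial complex `K`
dominated by `a' ≠ a` (every maximal simplex containing `a` contains `a'`),
then the inclusion of the geometric realization of `K \ a` into that of `K`
is a homotopy equivalence. -/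
theorem stmt11 (K : Finset (Finset V)) (hK : IsComplex K)
    (a a' : V) (ha : ({a} : Finset V) ∈ K) (hne : a' ≠ a)
    (hdom : ∀ σ : Finset V, IsMaximal K σ → a ∈ σ → a' ∈ σ)
    (hsub : realization (deleteVertex K a) ⊆ realization K) :
    ∃ h : ContinuousMap.HomotopyEquiv
        (realization (deleteVertex K a)) (realization K),
      ⇑h.toFun = Set.inclusion hsub := by
  classical
  have hpush : ∀ f : realization K, pushFunV a a' (f : V → ℝ) ∈
      realization (deleteVertex K a) := fun f => push_mem K hK a a' hne hdom f.2
  let r : C(realization K, realization (deleteVertex K a)) :=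
    ⟨fun f => ⟨pushFunV a a' (f : V → ℝ), hpush f⟩,
      Continuous.subtype_mk (continuous_pi fun v =>
        (continuous_pushFun_apply a a' v).comp continuous_subtype_val) _⟩
  let i : C(realization (deleteVertex K a), realization K) :=
    ⟨Set.inclusion hsub, continuous_inclusion hsub⟩
  refine ⟨⟨i, r, ?_, ?_⟩, rfl⟩
  · have heq : r.comp i = ContinuousMap.id (realization (deleteVertex K a)) := by
      ext f
      have h := f.2.2.2
      simp only [deleteVertex, Finset.mem_filter] at h
      have hfa : (f : V → ℝ) a = 0 := by
        by_contra hfa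
        exact h.2 ⟨Finset.mem_univ a, hfa⟩
      exact congrFun (pushFun_eq_of_zero a a' hne hfa) _
    rw [heq]
  · refine ⟨⟨⟨fun p => ⟨fun v => (1 - (p.1 : ℝ)) * pushFunV a a' (p.2 : V → ℝ) v +
        (p.1 : ℝ) * (p.2 : V → ℝ) v,
        comb_mem K hK a a' hne hdom p.2.2 p.1.2.1 p.1.2.2⟩, ?_⟩, ?_, ?_⟩⟩
    · refine Continuous.subtype_mk (continuous_pi fun v => ?_) _
      have h1 : Continuous fun p : unitInterval × realization K => (p.1 : ℝ) :=
        continuous_subtype_val.comp continuous_fst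
      have h2 : Continuous fun p : unitInterval × realization K => (p.2 : V → ℝ) v :=
        (continuous_apply v).comp (continuous_subtype_val.comp continuous_snd)
      have h3 : Continuous fun p : unitInterval × realization K =>
          pushFunV a a' (p.2 : V → ℝ) v :=
        (continuous_pushFun_apply a a' v).comp (continuous_subtype_val.comp continuous_snd)
      exact ((continuous_const.sub h1).mul h3).add (h1.mul h2)
    · intro x
      refine Subtype.ext (funext fun v => ?_)
      simp [i, r]
    · intro x
      refine Subtype.ext (funext fun v => ?_)
      simp
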